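/- arXiv:2507.11556 — 3 statements merged into one kernel-verified Lean document; each statement's English description precedes it below -/
import Mathlib

section
/- For any continuous map f : S² → ℝ², there exists a point x ∈ S² such that f(x) = f(-x). -/
noncomputable abbrev S2 := Metric.sphere (0 : EuclideanSpace ℝ (Fin 3)) 1

open Complex Set Real

set_option maxHeartbeats 1000000


lemma bu_int_const {S : Set ℝ} (hS : IsPreconnected S) {q : ℝ → ℝ} (hq : ContinuousOn q S)
    (hint : ∀ t ∈ S, ∃ n : ℤ, q t = n) {a b : ℝ} (ha : a ∈ S) (hb : b ∈ S) : q a = q b := by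
  by_contra hne
  have himg : IsPreconnected (q '' S) := hS.image q hq
  have hord := himg.ordConnected
  obtain ⟨m, hm⟩ := hint a ha
  obtain ⟨k, hk⟩ := hint b hb
  have hmk : m ≠ k := by rintro rfl; exact hne (hm.trans hk.symm)
  have h2 : min (q a) (q b) + 1/2 ≤ max (q a) (q b) := by
    rw [hm, hk]
    rcases le_total ((m:ℝ)) ((k:ℝ)) with h | h
    · have hmk' : m + 1 ≤ k := by
        have : m ≤ k := by exact_mod_cast h
        omega
      rw [min_eq_left h, max_eq_right h]
      have : (m:ℝ) + 1 ≤ k := by exact_mod_cast hmk'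
      linarith
    · have hmk' : k + 1 ≤ m := by
        have : k ≤ m := by exact_mod_cast h
        omega
      rw [min_eq_right h, max_eq_left h]
      have : (k:ℝ) + 1 ≤ m := by exact_mod_cast hmk'
      linarith
  have hcmem : min (q a) (q b) + 1/2 ∈ q '' S := by
    rcases le_total (q a) (q b) with h | h
    · exact hord.out (mem_image_of_mem q ha) (mem_image_of_mem q hb)
        ⟨by rw [min_eq_left h]; linarith, by rwa [max_eq_right h] at h2⟩
    · exact hord.out (mem_image_of_mem q hb) (mem_image_of_mem q ha)
        ⟨by rw [min_eq_right h]; linarith, by rwa [max_eq_left h] at h2⟩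
  obtain ⟨t, htS, htc⟩ := hcmem
  obtain ⟨j, hj⟩ := hint t htS
  have hi : ∃ i : ℤ, min (q a) (q b) = (i:ℝ) := by
    rcases le_total (q a) (q b) with h | h
    · exact ⟨m, by rw [min_eq_left h, hm]⟩
    · exact ⟨k, by rw [min_eq_right h, hk]⟩
  obtain ⟨i, hi⟩ := hi
  have : ((2*(j - i) : ℤ) : ℝ) = 1 := by
    push_cast
    rw [← hj, ← hi] at *
    linarith [htc]
  have : (2*(j - i) : ℤ) = 1 := by exact_mod_cast this
  omega


lemma bu_exp_eq {x y : ℝ} (h : Complex.exp (x * I) = Complex.exp (y * I)) :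
    ∃ n : ℤ, x = y + n * (2 * Real.pi) := by
  rw [Complex.exp_eq_exp_iff_exists_int] at h
  obtain ⟨n, hn⟩ := h
  refine ⟨n, ?_⟩
  have : ((x : ℂ)) * I = ((y + n * (2 * Real.pi) : ℝ) : ℂ) * I := by
    rw [hn]; push_cast; ring
  have := mul_right_cancel₀ Complex.I_ne_zero this
  exact_mod_cast this

lemma bu_lift_unique {S : Set ℝ} (hS : IsPreconnected S) {θ φ : ℝ → ℝ}
    (hθ : ContinuousOn θ S) (hφ : ContinuousOn φ S)
    (hl : ∀ t ∈ S, Complex.exp (θ t * Complex.I) = Complex.exp (φ t * Complex.I))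
    {a b : ℝ} (ha : a ∈ S) (hb : b ∈ S) : θ a - φ a = θ b - φ b := by
  have hq : ContinuousOn (fun t => (θ t - φ t) / (2 * Real.pi)) S :=
    (hθ.sub hφ).div_const _
  have hint : ∀ t ∈ S, ∃ n : ℤ, (θ t - φ t) / (2 * Real.pi) = n := by
    intro t ht
    obtain ⟨n, hn⟩ := bu_exp_eq (hl t ht)
    exact ⟨n, by field_simp [Real.pi_ne_zero]; linarith⟩
  have := bu_int_const hS hq hint ha hb
  have hpi := Real.pi_ne_zero
  rw [div_eq_div_iff (by positivity) (by positivity)] at this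
  have h2 : (0:ℝ) < 2 * Real.pi := by positivity
  nlinarith [this]

lemma bu_exp_arg {z : ℂ} (hz : ‖z‖ = 1) : Complex.exp (Complex.arg z * Complex.I) = z := by
  have := Complex.norm_mul_exp_arg_mul_I z
  rwa [hz, Complex.ofReal_one, one_mul] at this

lemma bu_exists_lift (h : ℝ → ℂ) (hc : Continuous h) (hu : ∀ t, ‖h t‖ = 1) :
    ∃ θ : ℝ → ℝ, Continuous θ ∧ ∀ t ∈ Set.Icc (0:ℝ) 1, h t = Complex.exp (θ t * Complex.I) := by
  have hne : ∀ t, h t ≠ 0 := fun t => by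
    intro h0; have := hu t; rw [h0] at this; simp at this
  have huc : UniformContinuousOn h (Set.Icc 0 1) :=
    isCompact_Icc.uniformContinuousOn_of_continuous hc.continuousOn
  rw [Metric.uniformContinuousOn_iff] at huc
  obtain ⟨δ, hδ0, hδ⟩ := huc 1 one_pos
  obtain ⟨n, hn⟩ := exists_nat_gt (1/δ)
  have hn0 : 0 < n := by
    rcases Nat.eq_zero_or_pos n with rfl | h
    · exfalso; simp at hn; linarith [one_div_pos.mpr hδ0]
    · exact h
  have hNpos : (0:ℝ) < n := by exact_mod_cast hn0
  have h1n : 1 / (n:ℝ) < δ := by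
    rw [div_lt_iff₀ hNpos]
    rw [div_lt_iff₀ hδ0] at hn
    linarith [mul_comm δ (n:ℝ)]
  set c : ℕ → ℝ → ℝ := fun k t => max ((k:ℝ)/n) (min t (((k:ℝ)+1)/n)) with hcdef
  have hclow : ∀ k : ℕ, ∀ t : ℝ, (k:ℝ)/n ≤ c k t := fun k t => le_max_left _ _
  have hchigh : ∀ k : ℕ, ∀ t : ℝ, c k t ≤ ((k:ℝ)+1)/n := fun k t =>
    max_le (by gcongr; linarith) (min_le_right _ _)
  have hc_mem : ∀ k : ℕ, k < n → ∀ t : ℝ, c k t ∈ Set.Icc (0:ℝ) 1 := by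
    intro k hk t
    constructor
    · exact le_trans (by positivity) (hclow k t)
    · refine le_trans (hchigh k t) ?_
      rw [div_le_one hNpos]
      have : (k:ℝ) + 1 ≤ n := by exact_mod_cast hk
      linarith
  have hk_mem : ∀ k : ℕ, k ≤ n → ((k:ℝ)/n) ∈ Set.Icc (0:ℝ) 1 :=
    fun k hk => ⟨by positivity, by rw [div_le_one hNpos]; exact_mod_cast hk⟩
  have hc_close : ∀ k : ℕ, k < n → ∀ t : ℝ, dist (c k t) ((k:ℝ)/n) < δ := by
    intro k hk t
    rw [Real.dist_eq, _root_.abs_of_nonneg (by linarith [hclow k t])]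
    have := hchigh k t
    have heq : ((k:ℝ)+1)/n - (k:ℝ)/n = 1/n := by ring
    linarith
  -- the ratios
  set r : ℕ → ℝ → ℂ := fun k t => h (c k t) / h ((k:ℝ)/n) with hrdef
  have hrc : ∀ k : ℕ, Continuous (r k) := fun k =>
    ((hc.comp (continuous_const.max (continuous_id.min continuous_const))).div_const _)
  have hrabs : ∀ k t, ‖r k t‖ = 1 := by
    intro k t; rw [hrdef]; simp [norm_div, hu]
  have hslit : ∀ k : ℕ, k < n → ∀ t : ℝ, r k t ∈ Complex.slitPlane := by
    intro k hk t
    rw [Complex.mem_slitPlane_iff]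
    left
    have habs : ‖r k t - 1‖ < 1 := by
      rw [hrdef]
      simp only
      rw [div_sub_one (hne _), norm_div, hu]
      rw [div_one]
      have := hδ _ (hc_mem k hk t) _ (hk_mem k hk.le) (hc_close k hk t)
      rwa [Complex.dist_eq] at this
    have h1 := Complex.abs_re_le_norm (r k t - 1)
    have h2 := neg_abs_le ((r k t - 1).re)
    have h3 : (r k t - 1).re = (r k t).re - 1 := by simp
    linarith
  have hargc : ∀ k : ℕ, k < n → Continuous fun t => Complex.arg (r k t) := by
    intro k hk
    rw [continuous_iff_continuousAt]
    intro t
    exact (Complex.continuousAt_arg (hslit k hk t)).comp (hrc k).continuousAt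
  refine ⟨fun t => Complex.arg (h 0) + ∑ k ∈ Finset.range n, Complex.arg (r k t), ?_, ?_⟩
  · exact continuous_const.add (continuous_finset_sum _ fun k hk => hargc k (Finset.mem_range.mp hk))
  · -- telescoping
    have key : ∀ m : ℕ, m ≤ n → ∀ t : ℝ, 0 ≤ t →
        ∏ k ∈ Finset.range m, r k t = h (min t ((m:ℝ)/n)) / h 0 := by
      intro m hm
      induction m with
      | zero =>
        intro t ht
        simp [min_eq_right ht, div_self (hne 0)]
      | succ m ih =>
        intro t ht
        rw [Finset.prod_range_succ, ih (Nat.le_of_succ_le hm) t ht]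
        have hcast : ((m+1 : ℕ) : ℝ) = (m:ℝ) + 1 := by push_cast; ring
        rw [hcast]
        rcases le_total t ((m:ℝ)/n) with hle | hge
        · have h2 : min t (((m:ℝ)+1)/n) = t :=
            min_eq_left (hle.trans (by gcongr; linarith))
          have h3 : c m t = (m:ℝ)/n := by
            rw [hcdef]; simp only
            rw [h2]
            exact max_eq_left hle
          rw [min_eq_left hle, hrdef]
          simp only
          rw [h3, h2, div_self (hne _), mul_one]
        · have h1 : min t ((m:ℝ)/n) = (m:ℝ)/n := min_eq_right hge
          have h3 : c m t = min t (((m:ℝ)+1)/n) :=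
            max_eq_right (le_min hge (by gcongr; linarith))
          rw [h1, hrdef]
          simp only
          rw [h3]
          exact div_mul_div_cancel₀' (hne _) _ _
    intro t ht
    have hsum : ((Complex.arg (h 0) + ∑ k ∈ Finset.range n, Complex.arg (r k t) : ℝ) : ℂ) * Complex.I
        = (Complex.arg (h 0) : ℂ) * Complex.I + ∑ k ∈ Finset.range n, (Complex.arg (r k t) : ℂ) * Complex.I := by
      push_cast
      rw [add_mul, Finset.sum_mul]
    rw [hsum, Complex.exp_add, Complex.exp_sum]
    have : ∀ k ∈ Finset.range n, Complex.exp ((Complex.arg (r k t) : ℂ) * Complex.I) = r k t :=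
      fun k _ => bu_exp_arg (hrabs k t)
    rw [Finset.prod_congr rfl this, bu_exp_arg (hu 0)]
    rw [key n le_rfl t ht.1]
    rw [div_self hNpos.ne', min_eq_left ht.2]
    rw [mul_div_cancel₀ _ (hne 0)]
lemma bu_unit_slit {z w : ℂ} (hz : ‖z‖ = 1) (hw : ‖w‖ = 1)
    (hd : ‖z - w‖ < 2) : z / w ∈ Complex.slitPlane := by
  have hwne : w ≠ 0 := by intro h; rw [h] at hw; simp at hw
  have habs : ‖z / w‖ = 1 := by rw [norm_div, hz, hw, div_one]
  rw [Complex.mem_slitPlane_iff]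
  by_cases him : (z / w).im = 0
  · left
    have hre : z / w = (((z / w).re : ℝ) : ℂ) := Complex.ext rfl (by simp [him])
    have habs' : |(z / w).re| = 1 := by
      rw [hre] at habs; rwa [Complex.norm_real, Real.norm_eq_abs] at habs
    rcases abs_eq (zero_le_one) |>.mp habs' with h | h
    · rw [h]; norm_num
    · exfalso
      have hzw : z = -w := by
        have : z / w = -1 := by rw [hre, h]; norm_num
        rw [div_eq_iff hwne] at this
        rw [this]; ring
      rw [hzw] at hd
      have : (-w - w : ℂ) = -(2 * w) := by ring
      rw [this, norm_neg, norm_mul, hw] at hd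
      simp at hd
  · right; exact him




noncomputable def buσ (s : ℝ) : ℝ := max 0 (min s 1)

lemma buσ_mem (s : ℝ) : buσ s ∈ Set.Icc (0:ℝ) 1 :=
  ⟨le_max_left _ _, max_le zero_le_one (min_le_right _ _)⟩

@[fun_prop] lemma buσ_cont : Continuous buσ := continuous_const.max (continuous_id.min continuous_const)

noncomputable def buV (s t : ℝ) : EuclideanSpace ℝ (Fin 3) :=
  WithLp.toLp 2 fun i : Fin 3 => if i.val = 0 then buσ s * Real.cos (2 * π * t)
    else if i.val = 1 then buσ s * Real.sin (2 * π * t)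
    else Real.sqrt (1 - buσ s ^ 2)

lemma buV_zero (s t : ℝ) : buV s t 0 = buσ s * Real.cos (2 * π * t) := rfl
lemma buV_one (s t : ℝ) : buV s t 1 = buσ s * Real.sin (2 * π * t) := rfl
lemma buV_two (s t : ℝ) : buV s t 2 = Real.sqrt (1 - buσ s ^ 2) := rfl

lemma buV_mem (s t : ℝ) : buV s t ∈ S2 := by
  rw [mem_sphere_zero_iff_norm, EuclideanSpace.norm_eq]
  rw [Fin.sum_univ_three]
  have h1 : buσ s ^ 2 ≤ 1 := by
    have := buσ_mem s
    nlinarith [this.1, this.2]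
  have hsq : Real.sqrt (1 - buσ s ^ 2) ^ 2 = 1 - buσ s ^ 2 :=
    Real.sq_sqrt (by linarith)
  rw [Real.sqrt_eq_one, buV_zero, buV_one, buV_two]
  simp only [Real.norm_eq_abs, _root_.sq_abs]
  nlinarith [Real.sin_sq_add_cos_sq (2 * π * t), hsq, _root_.sq_abs (buσ s * Real.cos (2 * π * t)),
    _root_.sq_abs (buσ s * Real.sin (2 * π * t)), _root_.sq_abs (Real.sqrt (1 - buσ s ^ 2))]

noncomputable def buP (s t : ℝ) : S2 := ⟨buV s t, buV_mem s t⟩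

lemma buP_cont : Continuous fun p : ℝ × ℝ => buP p.1 p.2 := by
  apply Continuous.subtype_mk
  unfold buV
  apply (PiLp.continuous_toLp 2 _).comp
  apply continuous_pi
  intro i
  split_ifs
  · fun_prop
  · fun_prop
  · apply Real.continuous_sqrt.comp
    fun_prop

lemma buP_zero (t : ℝ) : buP 0 t = buP 0 0 := by
  apply Subtype.ext
  ext i
  have h0 : buσ 0 = 0 := by simp [buσ]
  fin_cases i <;> simp [buP, buV, h0]

lemma buP_loop (s t : ℝ) : buP s (t + 1) = buP s t := by
  apply Subtype.ext
  ext i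
  have hc : Real.cos (2 * π * (t+1)) = Real.cos (2 * π * t) := by
    rw [show 2 * π * (t+1) = 2 * π * t + 2 * π by ring, Real.cos_add_two_pi]
  have hs : Real.sin (2 * π * (t+1)) = Real.sin (2 * π * t) := by
    rw [show 2 * π * (t+1) = 2 * π * t + 2 * π by ring, Real.sin_add_two_pi]
  fin_cases i <;> simp [buP, buV, hc, hs]

lemma buP_odd (t : ℝ) : buP 1 (t + 2⁻¹) = -(buP 1 t) := by
  apply Subtype.ext
  rw [coe_neg_sphere]
  ext i
  have h1 : buσ 1 = 1 := by simp [buσ]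
  have hc : Real.cos (2 * π * (t+2⁻¹)) = -Real.cos (2 * π * t) := by
    rw [show 2 * π * (t+2⁻¹) = 2 * π * t + π by ring, Real.cos_add_pi]
  have hs : Real.sin (2 * π * (t+2⁻¹)) = -Real.sin (2 * π * t) := by
    rw [show 2 * π * (t+2⁻¹) = 2 * π * t + π by ring, Real.sin_add_pi]
  have hneg : ∀ (x : EuclideanSpace ℝ (Fin 3)) (j : Fin 3), (-x) j = -(x j) := fun x j => rfl
  rw [hneg]
  fin_cases i <;> simp [buP, buV, h1, hc, hs]
attribute [irreducible] buP buV buσ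

theorem borsuk_ulam (f : S2 → EuclideanSpace ℝ (Fin 2)) (hf : Continuous f) :
    ∃ x : S2, f x = f (-x) := by
  by_contra hcon
  push_neg at hcon
  have hnegc : Continuous (fun x : S2 => -x) := continuous_neg
  -- the nonvanishing odd unit complex map
  obtain ⟨u, hucont, huabs, huodd⟩ : ∃ u : S2 → ℂ, Continuous u ∧
      (∀ x, ‖u x‖ = 1) ∧ (∀ x, u (-x) = - u x) := by
    set g : S2 → ℂ := fun x =>
      ((f x 0 - f (-x) 0 : ℝ) : ℂ) + ((f x 1 - f (-x) 1 : ℝ) : ℂ) * Complex.I with hg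
    have happly : ∀ i : Fin 2, Continuous fun x : S2 => f x i := fun i =>
      (PiLp.continuous_apply 2 _ i).comp hf
    have hgcont : Continuous g := by
      apply Continuous.add
      · exact Complex.continuous_ofReal.comp ((happly 0).sub ((happly 0).comp hnegc))
      · exact (Complex.continuous_ofReal.comp
          ((happly 1).sub ((happly 1).comp hnegc))).mul continuous_const
    have hgne : ∀ x, g x ≠ 0 := by
      intro x hx
      apply hcon x
      have hre : f x 0 - f (-x) 0 = 0 := by
        have := congrArg Complex.re hx
        simp only [hg, Complex.add_re, Complex.ofReal_re, Complex.mul_re, Complex.I_re,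
          Complex.ofReal_im, Complex.I_im, Complex.zero_re] at this
        linarith
      have him : f x 1 - f (-x) 1 = 0 := by
        have := congrArg Complex.im hx
        simp only [hg, Complex.add_im, Complex.ofReal_im, Complex.mul_im, Complex.I_im,
          Complex.ofReal_re, Complex.I_re, Complex.zero_im] at this
        linarith
      ext i
      fin_cases i
      · show f x 0 = f (-x) 0
        linarith
      · show f x 1 = f (-x) 1
        linarith
    have hgodd : ∀ x, g (-x) = - g x := by
      intro x
      rw [hg]
      simp only [neg_neg]
      push_cast
      ring
    -- normalized map
    set u : S2 → ℂ := fun x => g x / ((‖g x‖ : ℝ) : ℂ) with hu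
    have huabs : ∀ x, ‖u x‖ = 1 := by
      intro x
      rw [hu]
      simp only [norm_div, Complex.norm_real, norm_norm]
      rw [div_self]
      simpa using hgne x
    have hune : ∀ x, u x ≠ 0 := by
      intro x hx; have := huabs x; rw [hx] at this; simp at this
    have hucont : Continuous u := by
      apply hgcont.div (Complex.continuous_ofReal.comp (continuous_norm.comp hgcont))
      intro x
      simpa using hgne x
    have huodd : ∀ x, u (-x) = - u x := by
      intro x
      rw [hu]
      simp only [hgodd x, norm_neg, neg_div]
    refine ⟨u, hucont, huabs, huodd⟩
  have hune : ∀ x, u x ≠ 0 := by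
    intro x hx; have := huabs x; rw [hx] at this; simp at this
  -- the family of loops and lifts
  have hHcont : Continuous fun p : ℝ × ℝ => u (buP p.1 p.2) := hucont.comp buP_cont
  have hloops : ∀ s : ℝ, ∃ θ : ℝ → ℝ, Continuous θ ∧
      ∀ t ∈ Set.Icc (0:ℝ) 1, u (buP s t) = Complex.exp (θ t * Complex.I) := by
    intro s
    exact bu_exists_lift (fun t => u (buP s t))
      (hucont.comp (buP_cont.comp (Continuous.prodMk_right s))) (fun t => huabs _)
  choose Θ hΘc hΘl using hloops
  set W : ℝ → ℝ := fun s => Θ s 1 - Θ s 0 with hW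
  have h01 : (0:ℝ) ∈ Set.Icc (0:ℝ) 1 := by norm_num
  have h11 : (1:ℝ) ∈ Set.Icc (0:ℝ) 1 := by norm_num
  have hloop' : ∀ s : ℝ, buP s 1 = buP s 0 := by
    intro s; have := buP_loop s 0; rwa [zero_add] at this
  -- W s is an integer multiple of 2π
  have hWint : ∀ s : ℝ, ∃ n : ℤ, W s / (2 * π) = n := by
    intro s
    have he : Complex.exp (Θ s 1 * Complex.I) = Complex.exp (Θ s 0 * Complex.I) := by
      rw [← hΘl s 1 h11, ← hΘl s 0 h01, hloop' s]
    obtain ⟨n, hn⟩ := bu_exp_eq he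
    refine ⟨n, ?_⟩
    rw [hW]
    field_simp
    linarith
  -- comparison of winding for uniformly close loops
  have hcomp : ∀ s s' : ℝ,
      (∀ t ∈ Set.Icc (0:ℝ) 1, ‖u (buP s' t) - u (buP s t)‖ < 2) → W s' = W s := by
    intro s s' hclose
    set A : ℝ → ℝ := fun t => Complex.arg (u (buP s' t) / u (buP s t)) with hA
    have hAcont : ContinuousOn A (Set.Icc 0 1) := by
      intro t ht
      apply ContinuousAt.continuousWithinAt
      have c1 : ContinuousAt (fun t : ℝ => u (buP s' t)) t :=
        (hucont.comp (buP_cont.comp (Continuous.prodMk_right s'))).continuousAt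
      have c2 : ContinuousAt (fun t : ℝ => u (buP s t)) t :=
        (hucont.comp (buP_cont.comp (Continuous.prodMk_right s))).continuousAt
      have hruc : ContinuousAt (fun t : ℝ => u (buP s' t) / u (buP s t)) t :=
        c1.div c2 (hune _)
      exact ContinuousAt.comp (x := t) (g := Complex.arg)
        (f := fun t : ℝ => u (buP s' t) / u (buP s t))
        (Complex.continuousAt_arg (bu_unit_slit (huabs _) (huabs _) (hclose t ht))) hruc
    have hratio : ∀ t, ‖u (buP s' t) / u (buP s t)‖ = 1 := by
      intro t; rw [norm_div, huabs, huabs, div_one]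
    have hl2 : ∀ t ∈ Set.Icc (0:ℝ) 1,
        Complex.exp (((Θ s t + A t : ℝ) : ℂ) * Complex.I) = Complex.exp (Θ s' t * Complex.I) := by
      intro t ht
      have : ((Θ s t + A t : ℝ) : ℂ) * Complex.I
          = (Θ s t : ℂ) * Complex.I + (A t : ℂ) * Complex.I := by push_cast; ring
      rw [this, Complex.exp_add, ← hΘl s t ht, hA]
      simp only
      rw [bu_exp_arg (hratio t), ← hΘl s' t ht]
      field_simp [hune]
    have := bu_lift_unique isPreconnected_Icc
      (((hΘc s).continuousOn).add hAcont) ((hΘc s').continuousOn) hl2 h01 h11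
    have hA10 : A 1 = A 0 := by rw [hA]; simp only [hloop']
    rw [hW]
    simp only [Pi.add_apply] at this ⊢
    linarith
  -- W is continuous (locally constant)
  have hWcont : Continuous W := by
    rw [continuous_iff_continuousAt]
    intro s0
    have hK : IsCompact (Set.Icc (s0-1) (s0+1) ×ˢ Set.Icc (0:ℝ) 1) :=
      isCompact_Icc.prod isCompact_Icc
    have huc := hK.uniformContinuousOn_of_continuous hHcont.continuousOn
    rw [Metric.uniformContinuousOn_iff] at huc
    obtain ⟨δ, hδ0, hδ⟩ := huc 2 two_pos
    have hloc : ∀ s : ℝ, dist s s0 < min δ 1 → W s = W s0 := by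
      intro s hs
      apply hcomp
      intro t ht
      have hm1 : (s, t) ∈ Set.Icc (s0-1) (s0+1) ×ˢ Set.Icc (0:ℝ) 1 := by
        constructor
        · have : |s - s0| < 1 := lt_of_lt_of_le (by rwa [Real.dist_eq] at hs) (min_le_right _ _)
          rcases abs_lt.mp this with ⟨hl, hr⟩
          exact ⟨by linarith, by linarith⟩
        · exact ht
      have hm2 : (s0, t) ∈ Set.Icc (s0-1) (s0+1) ×ˢ Set.Icc (0:ℝ) 1 := by
        constructor
        · constructor <;> simp <;> linarith
        · exact ht
      have hd : dist (s, t) (s0, t) < δ := by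
        rw [Prod.dist_eq]
        simp only [dist_self]
        apply max_lt (lt_of_lt_of_le hs (min_le_left _ _)) hδ0
      have := hδ _ hm1 _ hm2 hd
      rwa [Complex.dist_eq] at this
    have hball : ∀ s ∈ Metric.ball s0 (min δ 1), W s = W s0 := fun s hs =>
      hloc s (by rwa [Metric.mem_ball] at hs)
    apply ContinuousAt.congr (continuousAt_const (y := W s0))
    filter_upwards [Metric.ball_mem_nhds s0 (lt_min hδ0 one_pos)] with s hs
    exact (hball s hs).symm
  -- W 0 = 0
  have hW0 : W 0 = 0 := by
    have := bu_lift_unique (isPreconnected_Icc (a := (0:ℝ)) (b := 1))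
      ((hΘc 0).continuousOn) (continuousOn_const (c := Θ 0 0))
      (fun t ht => by
        rw [← hΘl 0 t ht, ← hΘl 0 0 h01, buP_zero t]) h01 h11
    rw [hW]; simp only
    linarith
  -- W 1 = 0 by connectedness
  have hW1 : W 1 = 0 := by
    have hq : ContinuousOn (fun s => W s / (2*π)) Set.univ :=
      (hWcont.div_const _).continuousOn
    have := bu_int_const isPreconnected_univ hq
      (fun t _ => hWint t) (Set.mem_univ (1:ℝ)) (Set.mem_univ (0:ℝ))
    have hpi : (0:ℝ) < 2*π := by positivity
    rw [hW0] at this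
    rw [div_eq_div_iff (by positivity) (by positivity)] at this
    nlinarith
  -- the odd loop has odd winding
  have hhalfmem : ∀ t ∈ Set.Icc (0:ℝ) 2⁻¹, t ∈ Set.Icc (0:ℝ) 1 ∧ t + 2⁻¹ ∈ Set.Icc (0:ℝ) 1 := by
    intro t ht
    obtain ⟨h1, h2⟩ := ht
    constructor <;> constructor <;> linarith
  have hhalf : ∀ t ∈ Set.Icc (0:ℝ) 2⁻¹,
      Complex.exp (Θ 1 (t + 2⁻¹) * Complex.I) = Complex.exp (((Θ 1 t + π : ℝ) : ℂ) * Complex.I) := by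
    intro t ht
    obtain ⟨ht1, ht2⟩ := hhalfmem t ht
    rw [← hΘl 1 (t + 2⁻¹) ht2, buP_odd t, huodd, hΘl 1 t ht1]
    have : ((Θ 1 t + π : ℝ) : ℂ) * Complex.I
        = (Θ 1 t : ℂ) * Complex.I + (π : ℂ) * Complex.I := by push_cast; ring
    rw [this, Complex.exp_add, Complex.exp_pi_mul_I]
    ring
  have hstep := bu_lift_unique (isPreconnected_Icc (a := (0:ℝ)) (b := 2⁻¹))
    (((hΘc 1).comp (continuous_id.add continuous_const)).continuousOn)
    (((hΘc 1).continuousOn).add continuousOn_const)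
    (fun t ht => by simpa using hhalf t ht)
    (Set.left_mem_Icc.mpr (by norm_num)) (Set.right_mem_Icc.mpr (by norm_num))
  -- hstep : Θ 1 (0 + 2⁻¹) - (Θ 1 0 + π) = Θ 1 (2⁻¹ + 2⁻¹) - (Θ 1 2⁻¹ + π)
  have hhz := hhalf 0 (Set.left_mem_Icc.mpr (by norm_num))
  rw [zero_add] at hhz
  obtain ⟨n, hn⟩ := bu_exp_eq hhz
  -- hn : Θ 1 2⁻¹ = (Θ 1 0 + π) + n * (2π)
  have hsum : Θ 1 1 - Θ 1 0 = 2 * π * (2 * n + 1) := by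
    simp only [Function.comp_apply, id_eq] at hstep
    norm_num at hstep
    push_cast at hn ⊢
    linarith
  rw [hW] at hW1
  simp only at hW1
  rw [hW1] at hsum
  have hpi := Real.pi_pos
  have : (2 * (n:ℝ) + 1) = 0 := by
    have h2pi : (0:ℝ) < 2 * π := by positivity
    by_contra hne
    rcases lt_or_gt_of_ne hne with h | h <;> nlinarith
  have : (2 * n + 1 : ℤ) = 0 := by exact_mod_cast this
  omega
end

section
/- If F : S² → ℝ² is a continuous odd map (F(-x) = -F(x) for all x), then F has a zero: there exists x ∈ S² with F(x) = 0. -/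
open Complex Finset Set
open scoped Real

noncomputable def nrm (z : ℂ) : ℂ := z / (‖z‖ : ℂ)

lemma nrm_mul (a b : ℂ) : nrm (a * b) = nrm a * nrm b := by
  unfold nrm
  rw [norm_mul]
  push_cast
  ring

lemma nrm_one : nrm 1 = 1 := by simp [nrm]

lemma nrm_neg_one : nrm (-1) = -1 := by simp [nrm]

lemma exp_arg_eq {z : ℂ} (hz : z ≠ 0) : Complex.exp (z.arg * Complex.I) = nrm z := by
  have habs : ((‖z‖ : ℝ) : ℂ) ≠ 0 := by
    simpa using hz
  rw [nrm, eq_div_iff habs, mul_comm]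
  exact Complex.norm_mul_exp_arg_mul_I z

lemma tele (γ : ℕ → ℂ) (hγ : ∀ k, γ k ≠ 0) (j : ℕ) :
    Complex.exp ((↑(∑ k ∈ Finset.range j, Complex.arg (γ (k + 1) / γ k)) : ℂ) * Complex.I)
      = nrm (γ j / γ 0) := by
  induction j with
  | zero => simp [nrm_one, div_self (hγ 0)]
  | succ j ih =>
    rw [Finset.sum_range_succ, Complex.ofReal_add, add_mul, Complex.exp_add, ih,
      exp_arg_eq (div_ne_zero (hγ (j + 1)) (hγ j)), ← nrm_mul]
    congr 1
    rw [div_mul_div_comm, mul_comm (γ j), mul_div_mul_right _ _ (hγ j)]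

noncomputable def sph (u t : ℝ) : EuclideanSpace ℝ (Fin 3) :=
  (WithLp.equiv 2 (Fin 3 → ℝ)).symm
    ![Real.sin u * Real.cos (2 * π * t), Real.sin u * Real.sin (2 * π * t), Real.cos u]

lemma sph_cont : Continuous fun p : ℝ × ℝ => sph p.1 p.2 := by
  unfold sph
  refine (PiLp.continuous_toLp (p := 2) (β := fun _ : Fin 3 => ℝ)).comp ?_
  refine continuous_pi fun i => ?_
  fin_cases i <;> simp <;> fun_prop

lemma sph_mem (u t : ℝ) : sph u t ∈ Metric.sphere (0 : EuclideanSpace ℝ (Fin 3)) 1 := by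
  rw [mem_sphere_zero_iff_norm, EuclideanSpace.norm_eq]
  have h : ∑ i, ‖sph u t i‖ ^ 2 = 1 := by
    rw [Fin.sum_univ_three]
    simp only [sph, WithLp.equiv_symm_apply, PiLp.toLp_apply, Matrix.cons_val_zero, Matrix.cons_val_one,
      Matrix.head_cons, Matrix.cons_val_two, Matrix.tail_cons, Real.norm_eq_abs]
    simp only [_root_.sq_abs]
    linear_combination (Real.sin u) ^ 2 * Real.sin_sq_add_cos_sq (2 * π * t) +
      Real.sin_sq_add_cos_sq u
  rw [h, Real.sqrt_one]

noncomputable def sphS (u t : ℝ) : S2 := ⟨sph u t, sph_mem u t⟩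

lemma sphS_cont : Continuous fun p : ℝ × ℝ => sphS p.1 p.2 :=
  sph_cont.subtype_mk _

lemma sph_zero (t : ℝ) : sphS 0 t = sphS 0 0 := by
  apply Subtype.ext
  show sph 0 t = sph 0 0
  ext i
  fin_cases i <;> simp [sph, WithLp.equiv_symm_apply, PiLp.toLp_apply]

lemma sph_period (u t : ℝ) : sphS u (t + 1) = sphS u t := by
  apply Subtype.ext
  show sph u (t + 1) = sph u t
  have h : 2 * π * (t + 1) = 2 * π * t + 2 * π := by ring
  ext i
  fin_cases i <;>
    simp [sph, WithLp.equiv_symm_apply, PiLp.toLp_apply, h, Real.cos_add_two_pi, Real.sin_add_two_pi]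

lemma sph_anti (t : ℝ) : sphS (π / 2) (t + 1 / 2) = -sphS (π / 2) t := by
  apply Subtype.ext
  rw [coe_neg_sphere]
  show sph (π / 2) (t + 1 / 2) = -sph (π / 2) t
  have h : 2 * π * (t + 2⁻¹) = 2 * π * t + π := by ring
  ext i
  fin_cases i <;>
    simp [sph, WithLp.equiv_symm_apply, PiLp.toLp_apply, h, Real.cos_add_pi, Real.sin_add_pi,
      Real.cos_pi_div_two, Real.sin_pi_div_two]

theorem odd_map_has_zero (F : S2 → EuclideanSpace ℝ (Fin 2)) (hF : Continuous F)
    (hodd : ∀ x : S2, F (-x) = -F x) : ∃ x : S2, F x = 0 := by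
  by_contra hcon
  push_neg at hcon
  -- the complex-valued map
  set f : S2 → ℂ := fun x => (F x 0 : ℂ) + (F x 1 : ℂ) * Complex.I with hfdef
  have hc0 : Continuous fun x : S2 => F x 0 := (EuclideanSpace.proj (0 : Fin 2)).continuous.comp hF
  have hc1 : Continuous fun x : S2 => F x 1 := (EuclideanSpace.proj (1 : Fin 2)).continuous.comp hF
  have hfc : Continuous f := by
    apply Continuous.add
    · exact Complex.continuous_ofReal.comp hc0
    · exact (Complex.continuous_ofReal.comp hc1).mul continuous_const
  have hf0 : ∀ x, f x ≠ 0 := by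
    intro x h
    simp only [hfdef, Complex.ext_iff, Complex.add_re, Complex.ofReal_re, Complex.mul_re,
      Complex.ofReal_im, Complex.I_re, Complex.I_im, Complex.add_im, Complex.mul_im,
      Complex.zero_re, Complex.zero_im] at h
    apply hcon x
    ext i
    fin_cases i
    · show F x 0 = 0
      linarith [h.1]
    · show F x 1 = 0
      linarith [h.2]
  have hfodd : ∀ x, f (-x) = -f x := by
    intro x
    simp only [hfdef, hodd x]
    have h0 : (-F x) 0 = -(F x 0) := rfl
    have h1 : (-F x) 1 = -(F x 1) := rfl
    rw [h0, h1]
    push_cast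
    ring
  -- the homotopy
  set H : ℝ × ℝ → ℂ := fun p => f (sphS p.1 p.2) with hHdef
  have hHc : Continuous H := hfc.comp sphS_cont
  have hH0 : ∀ p, H p ≠ 0 := fun p => hf0 _
  have hHper : ∀ u t, H (u, t + 1) = H (u, t) := by
    intro u t; simp only [hHdef]; rw [sph_period]
  have hHconst : ∀ t, H (0, t) = H (0, 0) := by
    intro t; simp only [hHdef]; rw [sph_zero]
  have hHanti : ∀ t, H (π / 2, t + 1 / 2) = -H (π / 2, t) := by
    intro t; simp only [hHdef]; rw [sph_anti, hfodd]
  -- compactness bounds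
  set K : Set (ℝ × ℝ) := Set.Icc 0 (π / 2) ×ˢ Set.Icc (0 : ℝ) 1 with hKdef
  have hπ2 : (0 : ℝ) ≤ π / 2 := by positivity
  have hKne : K.Nonempty := ⟨(0, 0), ⟨⟨le_rfl, hπ2⟩, ⟨le_rfl, zero_le_one⟩⟩⟩
  have hKcomp : IsCompact K := isCompact_Icc.prod isCompact_Icc
  obtain ⟨p₀, hp₀K, hmin⟩ :=
    hKcomp.exists_isMinOn hKne ((continuous_norm.comp hHc).continuousOn)
  set m : ℝ := ‖H p₀‖ with hmdef
  have hm : 0 < m := norm_pos_iff.mpr (hH0 p₀)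
  have hmle : ∀ p ∈ K, m ≤ ‖H p‖ := fun p hp => isMinOn_iff.mp hmin p hp
  -- uniform continuity
  have hUC := hKcomp.uniformContinuousOn_of_continuous hHc.continuousOn
  rw [Metric.uniformContinuousOn_iff] at hUC
  obtain ⟨δ, hδ, hδ'⟩ := hUC m hm
  obtain ⟨n, hn⟩ := exists_nat_one_div_lt hδ
  set M : ℕ := n + 1 with hMdef
  set N : ℕ := 2 * M with hNdef
  have hNpos : (0 : ℝ) < N := by
    have : 0 < N := by omega
    exact_mod_cast this
  have hNδ : 1 / (N : ℝ) < δ := by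
    refine lt_of_le_of_lt (one_div_le_one_div_of_le (by positivity) ?_) hn
    have : n + 1 ≤ N := by omega
    exact_mod_cast this
  -- partition points
  have htmem : ∀ k : ℕ, k ≤ N → ((k : ℝ) / N) ∈ Set.Icc (0 : ℝ) 1 := by
    intro k hk
    constructor
    · positivity
    · rw [div_le_one hNpos]; exact_mod_cast hk
  -- the path at level u
  set γ : ℝ → ℕ → ℂ := fun u k => H (u, (k : ℝ) / N) with hγdef
  have hγ0 : ∀ u k, γ u k ≠ 0 := fun u k => hH0 _
  -- oscillation bound
  have hosc : ∀ u ∈ Set.Icc (0 : ℝ) (π / 2), ∀ k : ℕ, k < N →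
      ‖γ u (k + 1) - γ u k‖ < m := by
    intro u hu k hk
    have h1 : ((u : ℝ), ((k + 1 : ℕ) : ℝ) / N) ∈ K := ⟨hu, htmem (k + 1) hk⟩
    have h2 : ((u : ℝ), ((k : ℕ) : ℝ) / N) ∈ K := ⟨hu, htmem k hk.le⟩
    have hdist : dist ((u : ℝ), ((k + 1 : ℕ) : ℝ) / N) ((u : ℝ), ((k : ℕ) : ℝ) / N) < δ := by
      rw [Prod.dist_eq]
      simp only [dist_self]
      rw [max_eq_right dist_nonneg, Real.dist_eq]
      have he : ((k + 1 : ℕ) : ℝ) / N - ((k : ℕ) : ℝ) / N = 1 / N := by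
        push_cast
        field_simp
        ring
      rw [he, abs_of_pos (by positivity)]
      exact hNδ
    have hd := hδ' _ h1 _ h2 hdist
    rw [Complex.dist_eq] at hd
    exact hd
  -- ratios lie in the slit plane
  have hslit : ∀ u ∈ Set.Icc (0 : ℝ) (π / 2), ∀ k : ℕ, k < N →
      (γ u (k + 1) / γ u k) ∈ Complex.slitPlane := by
    intro u hu k hk
    have hk2 : ((u : ℝ), ((k : ℕ) : ℝ) / N) ∈ K := ⟨hu, htmem k hk.le⟩
    have habs : ‖γ u (k + 1) / γ u k - 1‖ < 1 := by
      have hne := hγ0 u k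
      have he : γ u (k + 1) / γ u k - 1 = (γ u (k + 1) - γ u k) / γ u k := by
        field_simp
      rw [he, norm_div, div_lt_one (norm_pos_iff.mpr hne)]
      exact lt_of_lt_of_le (hosc u hu k hk) (hmle _ hk2)
    rw [Complex.mem_slitPlane_iff]
    left
    have hre := Complex.abs_re_le_norm (γ u (k + 1) / γ u k - 1)
    rw [Complex.sub_re, Complex.one_re] at hre
    have h := abs_lt.1 (hre.trans_lt habs)
    linarith [h.1]
  -- winding sum
  set W : ℝ → ℝ := fun u => ∑ k ∈ Finset.range N, Complex.arg (γ u (k + 1) / γ u k) with hWdef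
  -- W u is a multiple of 2π
  have hWint : ∀ u : ℝ, ∃ j : ℤ, W u = j * (2 * π) := by
    intro u
    have h1 : Complex.exp ((W u : ℂ) * Complex.I) = 1 := by
      simp only [hWdef]
      rw [tele (γ u) (hγ0 u) N]
      have hNN : γ u N = γ u 0 := by
        have he : ((N : ℕ) : ℝ) / N = (0 : ℝ) / N + 1 := by field_simp; ring
        simp only [hγdef]
        push_cast
        rw [show ((N : ℝ)) / N = ((0 : ℕ) : ℝ) / N + 1 by push_cast; field_simp; ring, hHper]
        norm_num
      rw [hNN, div_self (hγ0 u 0), nrm_one]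
    rw [Complex.exp_eq_one_iff] at h1
    obtain ⟨j, hj⟩ := h1
    refine ⟨j, ?_⟩
    have h2 : ((W u : ℝ) : ℂ) = (j : ℂ) * (2 * (π : ℂ)) :=
      mul_right_cancel₀ Complex.I_ne_zero (by linear_combination hj)
    exact_mod_cast h2
  -- continuity of W on the interval
  have hWc : ContinuousOn W (Set.Icc 0 (π / 2)) := by
    simp only [hWdef]
    apply continuousOn_finset_sum
    intro k hk
    rw [Finset.mem_range] at hk
    intro u hu
    have hratio : ContinuousAt (fun u : ℝ => γ u (k + 1) / γ u k) u := by
      apply ContinuousAt.div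
      · exact (hHc.comp (continuous_id.prodMk continuous_const)).continuousAt
      · exact (hHc.comp (continuous_id.prodMk continuous_const)).continuousAt
      · exact hγ0 u k
    exact (ContinuousAt.comp (x := u) (Complex.continuousAt_arg (hslit u hu k hk))
      hratio).continuousWithinAt
  -- W 0 = 0
  have hW0 : W 0 = 0 := by
    simp only [hWdef]
    apply Finset.sum_eq_zero
    intro k hk
    have he : γ 0 (k + 1) = γ 0 k := by
      simp only [hγdef]
      rw [hHconst (((k + 1 : ℕ) : ℝ) / N), hHconst (((k : ℕ) : ℝ) / N)]
    rw [he, div_self (hγ0 0 k), Complex.arg_one]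
  -- W (π/2) = 0 by the intermediate value theorem
  have hπ0 : (π : ℝ) ≠ 0 := Real.pi_ne_zero
  have hπpos : 0 < π := Real.pi_pos
  have hWhalf : W (π / 2) = 0 := by
    by_contra hc
    obtain ⟨j, hj⟩ := hWint (π / 2)
    rcases lt_or_gt_of_ne hc with hneg | hpos
    · have hjneg : (j : ℝ) < 0 := by nlinarith [hj ▸ hneg]
      have hj1 : (j : ℝ) ≤ -1 := by
        have : j < 0 := by exact_mod_cast hjneg
        have : j ≤ -1 := by omega
        exact_mod_cast this
      have hle : W (π / 2) ≤ -(2 * π) := by rw [hj]; nlinarith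
      have hmem : -π ∈ Set.Icc (W (π / 2)) (W 0) := by
        rw [hW0]; constructor <;> linarith
      obtain ⟨u, hu, hWu⟩ := intermediate_value_Icc' hπ2 hWc hmem
      obtain ⟨j', hj'⟩ := hWint u
      rw [hWu] at hj'
      have h2 : π * (-1 : ℝ) = π * (2 * (j' : ℝ)) := by linear_combination hj'
      have h3 : (-1 : ℝ) = 2 * (j' : ℝ) := mul_left_cancel₀ hπ0 h2
      have h4 : (-1 : ℤ) = 2 * j' := by exact_mod_cast h3
      omega
    · have hjpos : (0 : ℝ) < j := by nlinarith [hj ▸ hpos]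
      have hj1 : (1 : ℝ) ≤ j := by
        have : 0 < j := by exact_mod_cast hjpos
        have : 1 ≤ j := by omega
        exact_mod_cast this
      have hle : 2 * π ≤ W (π / 2) := by rw [hj]; nlinarith
      have hmem : π ∈ Set.Icc (W 0) (W (π / 2)) := by
        rw [hW0]; constructor <;> linarith
      obtain ⟨u, hu, hWu⟩ := intermediate_value_Icc hπ2 hWc hmem
      obtain ⟨j', hj'⟩ := hWint u
      rw [hWu] at hj'
      have h2 : π * (1 : ℝ) = π * (2 * (j' : ℝ)) := by linear_combination hj'
      have h3 : (1 : ℝ) = 2 * (j' : ℝ) := mul_left_cancel₀ hπ0 h2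
      have h4 : (1 : ℤ) = 2 * j' := by exact_mod_cast h3
      omega
  -- oddness: shift by half a period negates
  have hshift : ∀ k : ℕ, γ (π / 2) (k + M) = -γ (π / 2) k := by
    intro k
    have harg : ((k + M : ℕ) : ℝ) / N = ((k : ℕ) : ℝ) / N + 1 / 2 := by
      simp only [hNdef]
      push_cast
      have hM0 : (M : ℝ) ≠ 0 := by positivity
      field_simp
    simp only [hγdef]
    rw [harg, hHanti]
  set A : ℝ := ∑ k ∈ Finset.range M, Complex.arg (γ (π / 2) (k + 1) / γ (π / 2) k) with hAdef
  have hWsplit : W (π / 2) = 2 * A := by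
    have hsecond : ∑ k ∈ Finset.Ico M (2 * M),
        Complex.arg (γ (π / 2) (k + 1) / γ (π / 2) k) = A := by
      rw [Finset.sum_Ico_eq_sum_range]
      have h2M : 2 * M - M = M := by omega
      rw [h2M, hAdef]
      apply Finset.sum_congr rfl
      intro k hk
      have e1 : γ (π / 2) (M + k + 1) = -γ (π / 2) (k + 1) := by
        have h := hshift (k + 1)
        rw [show k + 1 + M = M + k + 1 by omega] at h
        exact h
      have e2 : γ (π / 2) (M + k) = -γ (π / 2) k := by
        have h := hshift k
        rw [show k + M = M + k by omega] at h
        exact h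
      rw [e1, e2, neg_div_neg_eq]
    have hfirst : ∑ k ∈ Finset.Ico 0 M,
        Complex.arg (γ (π / 2) (k + 1) / γ (π / 2) k) = A := by
      rw [hAdef, Finset.range_eq_Ico]
    simp only [hWdef]
    rw [hNdef, Finset.range_eq_Ico,
      ← Finset.sum_Ico_consecutive _ (Nat.zero_le M) (by omega : M ≤ 2 * M),
      hfirst, hsecond]
    ring
  -- A is an odd multiple of π, contradiction
  have hAexp : Complex.exp ((A : ℂ) * Complex.I) = -1 := by
    simp only [hAdef]
    rw [tele (γ (π / 2)) (hγ0 (π / 2)) M]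
    have hM : γ (π / 2) M = -γ (π / 2) 0 := by
      have h := hshift 0
      rw [show 0 + M = M by omega] at h
      exact h
    rw [hM, neg_div, div_self (hγ0 (π / 2) 0), nrm_neg_one]
  have h1 : Complex.exp (((A - π : ℝ) : ℂ) * Complex.I) = 1 := by
    push_cast
    rw [sub_mul, Complex.exp_sub, hAexp, Complex.exp_pi_mul_I]
    norm_num
  rw [Complex.exp_eq_one_iff] at h1
  obtain ⟨j, hj⟩ := h1
  have hj2 : (A - π : ℝ) = (j : ℝ) * (2 * π) := by
    have h2 : ((A - π : ℝ) : ℂ) = (j : ℂ) * (2 * (π : ℂ)) :=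
      mul_right_cancel₀ Complex.I_ne_zero (by linear_combination hj)
    exact_mod_cast h2
  have hA0 : A = 0 := by
    have h := hWhalf
    rw [hWsplit] at h
    linarith
  rw [hA0] at hj2
  have h2 : π * (-1 : ℝ) = π * (2 * (j : ℝ)) := by linear_combination hj2
  have h3 : (-1 : ℝ) = 2 * (j : ℝ) := mul_left_cancel₀ hπ0 h2
  have h4 : (-1 : ℤ) = 2 * j := by exact_mod_cast h3
  omega
end

section
/- If f : S² → ℝ² is continuous and injective on some pair {x, -x} in the sense that f(x) ≠ f(-x) for all x ∈ S², then a contradiction follows; i.e., there is no continuous f : S² → ℝ² with f(x) ≠ f(-x) for every x ∈ S². -/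
open Complex Real

def Dsk : Set (ℝ × ℝ) := {v | v.1^2 + v.2^2 ≤ 1}

lemma Dsk_smul {t : ℝ} (ht0 : 0 ≤ t) (ht1 : t ≤ 1) {x : ℝ × ℝ} (hx : x ∈ Dsk) :
    t • x ∈ Dsk := by
  simp only [Dsk, Set.mem_setOf_eq, Prod.smul_fst, Prod.smul_snd, smul_eq_mul] at *
  have h2 : t^2 ≤ 1 := by nlinarith
  nlinarith [sq_nonneg t, hx, h2]

lemma Dsk_compact : IsCompact Dsk := by
  have hclosed : IsClosed Dsk := isClosed_le (by fun_prop) continuous_const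
  refine (isCompact_closedBall (0 : ℝ × ℝ) 1).of_isClosed_subset hclosed ?_
  intro v hv
  simp only [Dsk, Set.mem_setOf_eq] at hv
  simp only [Metric.mem_closedBall, dist_zero_right, Prod.norm_def, sup_le_iff]
  constructor <;> rw [Real.norm_eq_abs, abs_le] <;> constructor <;> nlinarith

lemma exists_log (F : ℝ × ℝ → ℂ) (hFc : Continuous F) (hF : ∀ v, F v ≠ 0) :
    ∃ L : ℝ × ℝ → ℂ, ContinuousOn L Dsk ∧ ∀ v ∈ Dsk, Complex.exp (L v) = F v := by
  -- minimum of ‖F‖ on Dsk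
  obtain ⟨v₀, hv₀D, hv₀⟩ := Dsk_compact.exists_isMinOn ⟨(0:ℝ×ℝ), by simp [Dsk]⟩
    (hFc.norm.continuousOn)
  set ε : ℝ := ‖F v₀‖ with hε
  have hεpos : 0 < ε := norm_pos_iff.mpr (hF v₀)
  have hεle : ∀ v ∈ Dsk, ε ≤ ‖F v‖ := fun v hv => hv₀ hv
  -- uniform continuity
  have hu : UniformContinuousOn F Dsk :=
    Dsk_compact.uniformContinuousOn_of_continuous hFc.continuousOn
  rw [Metric.uniformContinuousOn_iff] at hu
  obtain ⟨δ, hδpos, hδ⟩ := hu ε hεpos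
  obtain ⟨n, hn⟩ := exists_nat_one_div_lt hδpos
  set N : ℕ := n + 1 with hN
  have hNpos : (0:ℝ) < N := by positivity
  -- the ratio bound
  have hmem : ∀ (k : ℕ), k ≤ N → ∀ x ∈ Dsk, ((k:ℝ)/N) • x ∈ Dsk := by
    intro k hk x hx
    refine Dsk_smul (by positivity) ?_ hx
    rw [div_le_one hNpos]
    exact_mod_cast hk
  have hratio : ∀ (k : ℕ), k < N → ∀ x ∈ Dsk,
      ‖F ((((k:ℝ)+1)/N) • x) / F (((k:ℝ)/N) • x) - 1‖ < 1 := by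
    intro k hk x hx
    have hk1 : (((k:ℝ)+1)/N) • x ∈ Dsk := by
      have := hmem (k+1) hk x hx
      simp only [Nat.cast_add, Nat.cast_one] at this
      exact this
    have hk0 : (((k:ℝ))/N) • x ∈ Dsk := hmem k hk.le x hx
    have hdist : dist ((((k:ℝ)+1)/N) • x) (((k:ℝ)/N) • x) < δ := by
      rw [dist_eq_norm, ← sub_smul]
      have : ((k:ℝ)+1)/N - (k:ℝ)/N = 1/N := by ring
      rw [this, norm_smul]
      have hx1 : ‖x‖ ≤ 1 := by
        simp only [Dsk, Set.mem_setOf_eq] at hx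
        simp only [Prod.norm_def, sup_le_iff]
        constructor <;> rw [Real.norm_eq_abs, abs_le] <;> constructor <;> nlinarith
      calc ‖(1/(N:ℝ))‖ * ‖x‖ ≤ ‖(1/(N:ℝ))‖ * 1 := by
            apply mul_le_mul_of_nonneg_left hx1 (norm_nonneg _)
        _ = 1/(N:ℝ) := by rw [mul_one, Real.norm_eq_abs, abs_of_pos (by positivity)]
        _ < δ := by
            have h1 : (1:ℝ)/N = 1/((n:ℝ)+1) := by rw [hN]; push_cast; ring
            rw [h1]; exact hn
    have hdF : ‖F ((((k:ℝ)+1)/N) • x) - F (((k:ℝ)/N) • x)‖ < ε := by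
      have := hδ _ hk1 _ hk0 hdist
      rwa [dist_eq_norm] at this
    have hb : ε ≤ ‖F (((k:ℝ)/N) • x)‖ := hεle _ hk0
    rw [div_sub_one (hF _), norm_div]
    rw [div_lt_one (lt_of_lt_of_le hεpos hb)]
    exact lt_of_lt_of_le hdF hb
  -- define the logarithm
  refine ⟨fun x => Complex.log (F 0) + ∑ k ∈ Finset.range N,
      Complex.log (F ((((k:ℝ)+1)/N) • x) / F (((k:ℝ)/N) • x)), ?_, ?_⟩
  · -- continuity
    apply ContinuousOn.add continuousOn_const
    apply continuousOn_finset_sum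
    intro k hk
    rw [Finset.mem_range] at hk
    intro x hx
    apply ContinuousAt.continuousWithinAt
    apply ContinuousAt.clog
    · apply ContinuousAt.div
      · exact (hFc.comp (continuous_const_smul (((k:ℝ)+1)/N))).continuousAt
      · exact (hFc.comp (continuous_const_smul ((k:ℝ)/N))).continuousAt
      · exact hF _
    · have h1 := hratio k hk x hx
      have heq : F ((((k:ℝ)+1)/N) • x) / F (((k:ℝ)/N) • x)
          = 1 + (F ((((k:ℝ)+1)/N) • x) / F (((k:ℝ)/N) • x) - 1) := by ring
      rw [heq]
      exact Complex.mem_slitPlane_of_norm_lt_one h1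
  · -- exponential property
    intro x hx
    rw [Complex.exp_add, Complex.exp_sum]
    have hterm : ∀ k ∈ Finset.range N,
        Complex.exp (Complex.log (F ((((k:ℝ)+1)/N) • x) / F (((k:ℝ)/N) • x)))
          = F ((((k:ℝ)+1)/N) • x) / F (((k:ℝ)/N) • x) := by
      intro k _
      exact Complex.exp_log (div_ne_zero (hF _) (hF _))
    rw [Finset.prod_congr rfl hterm, Complex.exp_log (hF 0)]
    -- telescoping product
    have gen : ∀ m : ℕ, ∏ k ∈ Finset.range m,
        (F ((((k:ℝ)+1)/N) • x) / F (((k:ℝ)/N) • x))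
        = F (((m:ℝ)/N) • x) / F ((((0:ℕ):ℝ)/N) • x) := by
      intro m
      induction m with
      | zero => simp [div_self (hF _)]
      | succ m ih =>
        rw [Finset.prod_range_succ, ih]
        rw [Nat.cast_succ]
        field_simp
        push_cast
        exact mul_div_mul_left _ _ (hF _)
    have h0 : (((0:ℕ):ℝ)/N) • x = 0 := by norm_num
    have h1 : (((N:ℕ):ℝ)/N) • x = x := by
      rw [div_self (ne_of_gt hNpos), one_smul]
    rw [gen N, h0, h1]
    rw [mul_div_cancel₀ _ (hF 0)]

-- constancy of continuous functions valued in odd multiples of π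
lemma odd_pi_constancy {a b : ℝ} (hab : a ≤ b) (m : ℝ → ℝ)
    (hm : ContinuousOn m (Set.Icc a b))
    (hint : ∀ t ∈ Set.Icc a b, ∃ k : ℤ, m t = (2*k+1)*π) : m a = m b := by
  by_contra hne
  have haI : a ∈ Set.Icc a b := ⟨le_refl a, hab⟩
  have hbI : b ∈ Set.Icc a b := ⟨hab, le_refl b⟩
  obtain ⟨k₀, hk₀⟩ := hint a haI
  obtain ⟨k₁, hk₁⟩ := hint b hbI
  have hkne : k₀ ≠ k₁ := by
    intro h; apply hne; rw [hk₀, hk₁, h]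
  have key : ∀ c ∈ Set.Icc (m a) (m b) ∪ Set.Icc (m b) (m a),
      ∃ t ∈ Set.Icc a b, m t = c := by
    intro c hc
    rcases hc with hc | hc
    · obtain ⟨t, ht, hmt⟩ := intermediate_value_Icc hab hm hc
      exact ⟨t, ht, hmt⟩
    · obtain ⟨t, ht, hmt⟩ := intermediate_value_Icc' hab hm hc
      exact ⟨t, ht, hmt⟩
  rcases hkne.lt_or_gt with hlt | hlt
  · -- k₀ < k₁, so m a + π is strictly between
    have h2 : m a + 2*π ≤ m b := by
      rw [hk₀, hk₁]
      have : (k₀:ℝ) + 1 ≤ k₁ := by exact_mod_cast hlt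
      nlinarith [pi_pos]
    obtain ⟨t, ht, hmt⟩ := key (m a + π) (Or.inl ⟨by nlinarith [pi_pos], by nlinarith [pi_pos]⟩)
    obtain ⟨k, hk⟩ := hint t ht
    rw [hk, hk₀] at hmt
    have hmt' : (2*(k:ℝ)+1)*π = (2*(k₀:ℝ)+2)*π := by linarith [hmt]
    have : (2*(k:ℝ)+1) = 2*(k₀:ℝ)+2 := mul_right_cancel₀ pi_ne_zero hmt'
    have : 2*k+1 = 2*k₀+2 := by exact_mod_cast this
    omega
  · have h2 : m b + 2*π ≤ m a := by
      rw [hk₀, hk₁]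
      have : (k₁:ℝ) + 1 ≤ k₀ := by exact_mod_cast hlt
      nlinarith [pi_pos]
    obtain ⟨t, ht, hmt⟩ := key (m b + π) (Or.inr ⟨by nlinarith [pi_pos], by nlinarith [pi_pos]⟩)
    obtain ⟨k, hk⟩ := hint t ht
    rw [hk, hk₁] at hmt
    have hmt' : (2*(k:ℝ)+1)*π = (2*(k₁:ℝ)+2)*π := by linarith [hmt]
    have : (2*(k:ℝ)+1) = 2*(k₁:ℝ)+2 := mul_right_cancel₀ pi_ne_zero hmt'
    have : 2*k+1 = 2*k₁+2 := by exact_mod_cast this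
    omega

-- the hemisphere map
noncomputable def phi (v : ℝ × ℝ) : EuclideanSpace ℝ (Fin 3) :=
  (WithLp.equiv 2 (Fin 3 → ℝ)).symm ![v.1, v.2, Real.sqrt (1 - v.1^2 - v.2^2)]

lemma phi_apply (v : ℝ × ℝ) :
    phi v 0 = v.1 ∧ phi v 1 = v.2 ∧ phi v 2 = Real.sqrt (1 - v.1^2 - v.2^2) := by
  refine ⟨rfl, rfl, rfl⟩

lemma phi_cont : Continuous phi := by
  apply Continuous.comp (PiLp.continuous_toLp 2 (fun _ : Fin 3 => ℝ))
  refine continuous_pi fun i => ?_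
  fin_cases i
  · exact continuous_fst
  · exact continuous_snd
  · exact Real.continuous_sqrt.comp (by fun_prop)

lemma phi_norm {v : ℝ × ℝ} (hv : v.1^2 + v.2^2 ≤ 1) : ‖phi v‖ = 1 := by
  rw [EuclideanSpace.norm_eq]
  have h3 : (0:ℝ) ≤ 1 - v.1^2 - v.2^2 := by linarith
  rw [Fin.sum_univ_three]
  simp only [phi, WithLp.equiv_symm_apply, PiLp.toLp_apply, Matrix.cons_val_zero, Matrix.cons_val_one,
    Matrix.head_cons, Matrix.cons_val_two, Matrix.tail_cons, Real.norm_eq_abs, sq_abs,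
    _root_.abs_of_nonneg (Real.sqrt_nonneg _)]
  rw [Real.sq_sqrt h3]
  rw [show v.1^2 + v.2^2 + (1 - v.1^2 - v.2^2) = 1 by ring,
    Real.sqrt_one]


lemma phi_norm_pos (v : ℝ × ℝ) : 0 < ‖phi v‖ := by
  by_cases h : v.1^2 + v.2^2 ≤ 1
  · rw [phi_norm h]; norm_num
  · push_neg at h
    rw [norm_pos_iff]
    intro h0
    have h1 : phi v 0 = 0 := by rw [h0]; rfl
    have h2 : phi v 1 = 0 := by rw [h0]; rfl
    rw [(phi_apply v).1] at h1
    rw [(phi_apply v).2.1] at h2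
    rw [h1, h2] at h
    norm_num at h

noncomputable def Phi (v : ℝ × ℝ) : S2 :=
  ⟨‖phi v‖⁻¹ • phi v, by
    rw [mem_sphere_zero_iff_norm, norm_smul, norm_inv, norm_norm,
      inv_mul_cancel₀ (ne_of_gt (phi_norm_pos v))]⟩

lemma Phi_coe {v : ℝ × ℝ} (hv : v.1^2 + v.2^2 ≤ 1) :
    (Phi v : EuclideanSpace ℝ (Fin 3)) = phi v := by
  show ‖phi v‖⁻¹ • phi v = phi v
  rw [phi_norm hv, inv_one, one_smul]

lemma Phi_cont : Continuous Phi := by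
  apply Continuous.subtype_mk
  exact (phi_cont.norm.inv₀ (fun v => ne_of_gt (phi_norm_pos v))).smul phi_cont

lemma phi_neg {v : ℝ × ℝ} (hv : v.1^2 + v.2^2 = 1) : phi (-v) = -phi v := by
  have h0 : 1 - v.1^2 - v.2^2 = 0 := by linarith
  have h0' : 1 - (-v).1^2 - (-v).2^2 = 0 := by simp only [Prod.fst_neg, Prod.snd_neg]; nlinarith
  ext i
  have hneg : ∀ (w : EuclideanSpace ℝ (Fin 3)) (j : Fin 3), (-w) j = -(w j) := fun _ _ => rfl
  fin_cases i
  · show phi (-v) 0 = (-phi v) 0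
    rw [(phi_apply (-v)).1, hneg, (phi_apply v).1, Prod.fst_neg]
  · show phi (-v) 1 = (-phi v) 1
    rw [(phi_apply (-v)).2.1, hneg, (phi_apply v).2.1, Prod.snd_neg]
  · show phi (-v) 2 = (-phi v) 2
    rw [(phi_apply (-v)).2.2, hneg, (phi_apply v).2.2, h0, h0', Real.sqrt_zero, neg_zero]

lemma Phi_neg {v : ℝ × ℝ} (hv : v.1^2 + v.2^2 = 1) : Phi (-v) = -(Phi v) := by
  apply Subtype.ext
  rw [coe_neg_sphere]
  rw [Phi_coe (by simp only [Prod.fst_neg, Prod.snd_neg]; nlinarith),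
    Phi_coe hv.le]
  exact phi_neg hv

noncomputable def toC (y : EuclideanSpace ℝ (Fin 2)) : ℂ := (y 0 : ℂ) + (y 1 : ℂ) * Complex.I

lemma toC_re (y : EuclideanSpace ℝ (Fin 2)) : (toC y).re = y 0 := by simp [toC]

lemma toC_im (y : EuclideanSpace ℝ (Fin 2)) : (toC y).im = y 1 := by simp [toC]

lemma toC_cont : Continuous toC := by
  have capply : ∀ i : Fin 2, Continuous fun y : EuclideanSpace ℝ (Fin 2) => y i :=
    fun i => (continuous_apply i).comp (PiLp.continuous_ofLp 2 (fun _ : Fin 2 => ℝ))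
  exact ((Complex.continuous_ofReal.comp (capply 0)).add
    ((Complex.continuous_ofReal.comp (capply 1)).mul continuous_const))

lemma toC_inj {a b : EuclideanSpace ℝ (Fin 2)} (h : toC a = toC b) : a = b := by
  have h0 : a 0 = b 0 := by rw [← toC_re a, ← toC_re b, h]
  have h1 : a 1 = b 1 := by rw [← toC_im a, ← toC_im b, h]
  ext i
  fin_cases i
  · exact h0
  · exact h1

theorem no_antipodal_injective_map :
    ¬ ∃ f : S2 → EuclideanSpace ℝ (Fin 2), Continuous f ∧ ∀ x : S2, f x ≠ f (-x) := by
  rintro ⟨f, hf, hne⟩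
  set F : ℝ × ℝ → ℂ := fun v => toC (f (Phi v)) - toC (f (-(Phi v))) with hFdef
  have hFc : Continuous F := by
    apply Continuous.sub
    · exact toC_cont.comp (hf.comp Phi_cont)
    · exact toC_cont.comp (hf.comp (continuous_neg.comp Phi_cont))
  have hF : ∀ v, F v ≠ 0 := by
    intro v h
    exact hne (Phi v) (toC_inj (sub_eq_zero.mp h))
  obtain ⟨L, hL, hexp⟩ := exists_log F hFc hF
  set γ : ℝ → ℝ × ℝ := fun t => (Real.cos (2*π*t), Real.sin (2*π*t)) with hγdef
  have hγD : ∀ t, γ t ∈ Dsk := by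
    intro t
    simp only [Dsk, hγdef, Set.mem_setOf_eq]
    rw [Real.cos_sq_add_sin_sq]
  have hγ1 : ∀ t, (γ t).1^2 + (γ t).2^2 = 1 := fun t => Real.cos_sq_add_sin_sq _
  have hγhalf : ∀ t : ℝ, γ (t + 1/2) = -γ t := by
    intro t
    have harg : 2*π*(t + 1/2) = 2*π*t + π := by ring
    apply Prod.ext
    · show Real.cos (2*π*(t+1/2)) = -(γ t).1
      rw [harg, Real.cos_add_pi]
    · show Real.sin (2*π*(t+1/2)) = -(γ t).2
      rw [harg, Real.sin_add_pi]
  have hFneg : ∀ v : ℝ × ℝ, v.1^2 + v.2^2 = 1 → F (-v) = -F v := by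
    intro v hv
    rw [hFdef]
    simp only
    rw [Phi_neg hv, neg_neg]
    ring
  set h : ℝ → ℂ := fun t => L (γ t) with hhdef
  have hhc : Continuous h := by
    apply hL.comp_continuous ?_ hγD
    apply Continuous.prodMk <;> fun_prop
  set d : ℝ → ℂ := fun t => h (t + 1/2) - h t with hddef
  have hdc : Continuous d := (hhc.comp (by fun_prop)).sub hhc
  have hexp_d : ∀ t, Complex.exp (d t) = -1 := by
    intro t
    rw [hddef]
    simp only
    rw [Complex.exp_sub, hhdef]
    simp only
    rw [hexp _ (hγD _), hexp _ (hγD _), hγhalf t, hFneg _ (hγ1 t), neg_div,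
      div_self (hF _)]
  have hd_int : ∀ t : ℝ, ∃ k : ℤ, d t = (((2*(k:ℝ)+1)*π : ℝ) : ℂ) * Complex.I := by
    intro t
    have h1 : Complex.exp (d t - π*Complex.I) = 1 := by
      rw [Complex.exp_sub, hexp_d, Complex.exp_pi_mul_I]
      norm_num
    rw [Complex.exp_eq_one_iff] at h1
    obtain ⟨k, hk⟩ := h1
    refine ⟨k, ?_⟩
    have : d t = π*Complex.I + k * (2*π*Complex.I) := by linear_combination hk
    rw [this]
    push_cast
    ring
  set m : ℝ → ℝ := fun t => (d t).im with hmdef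
  have hmc : Continuous m := Complex.continuous_im.comp hdc
  have hint : ∀ t ∈ Set.Icc (0:ℝ) (1/2), ∃ k : ℤ, m t = (2*k+1)*π := by
    intro t _
    obtain ⟨k, hk⟩ := hd_int t
    refine ⟨k, ?_⟩
    rw [hmdef]
    simp only
    rw [hk, Complex.mul_I_im, Complex.ofReal_re]
  have hconst : m 0 = m (1/2) :=
    odd_pi_constancy (by norm_num) m hmc.continuousOn hint
  obtain ⟨k₀, hk₀⟩ := hd_int 0
  obtain ⟨k₁, hk₁⟩ := hd_int (1/2)
  have hm₀ : m 0 = (2*(k₀:ℝ)+1)*π := by rw [hmdef]; simp only; rw [hk₀, Complex.mul_I_im, Complex.ofReal_re]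
  have hm₁ : m (1/2) = (2*(k₁:ℝ)+1)*π := by
    rw [hmdef]; simp only; rw [hk₁, Complex.mul_I_im, Complex.ofReal_re]
  have hkk : k₀ = k₁ := by
    rw [hm₀, hm₁] at hconst
    have := mul_right_cancel₀ pi_ne_zero hconst
    have : (k₀:ℝ) = k₁ := by linarith
    exact_mod_cast this
  have hdd : d (1/2) = d 0 := by rw [hk₀, hk₁, hkk]
  have hloop : h 1 = h 0 := by
    rw [hhdef]
    simp only
    have : γ 1 = γ 0 := by
      apply Prod.ext
      · show Real.cos (2*π*1) = Real.cos (2*π*0)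
        norm_num [Real.cos_two_pi]
      · show Real.sin (2*π*1) = Real.sin (2*π*0)
        norm_num [Real.sin_two_pi]
    rw [this]
  have hsum : d (1/2) + d 0 = 0 := by
    rw [hddef]
    simp only
    rw [show (1:ℝ)/2 + 1/2 = 1 by norm_num, show (0:ℝ) + 1/2 = 1/2 by norm_num, hloop]
    ring
  rw [hdd] at hsum
  have hd0 : d 0 = 0 := by
    have : (2:ℂ) * d 0 = 0 := by linear_combination hsum
    simpa using this
  rw [hk₀] at hd0
  have : ((2*(k₀:ℝ)+1)*π : ℝ) = 0 := by
    have := congrArg Complex.im hd0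
    rwa [Complex.mul_I_im, Complex.ofReal_re] at this
  have h2k : 2*(k₀:ℝ)+1 = 0 := by
    rcases mul_eq_zero.mp this with hh | hh
    · exact hh
    · exact absurd hh pi_ne_zero
  have : (2*k₀+1 : ℤ) = 0 := by exact_mod_cast h2k
  omega
end
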